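/- A graph G is a hypo-unique-domination graph with γ(G) = 2 if and only if G is isomorphic to the complete graph K_n minus a perfect matching for some even n ≥ 4. -/

import Mathlib

open SimpleGraph

variable {V : Type*}

/-- `D` is a dominating set of `G`. -/
def IsDomSet (G : SimpleGraph V) (D : Finset V) : Prop :=
  ∀ v : V, ∃ u ∈ D, u = v ∨ G.Adj u v

/-- The domination number `γ(G)`. -/
noncomputable def domNum (G : SimpleGraph V) : ℕ :=
  sInf {n | ∃ D : Finset V, IsDomSet G D ∧ D.card = n}

/-- `D` is a minimum dominating set (γ-set) of `G`. -/
def IsGammaSet (G : SimpleGraph V) (D : Finset V) : Prop :=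
  IsDomSet G D ∧ D.card = domNum G

/-- The graph `G - x` obtained by deleting the vertex `x`. -/
def vdel (G : SimpleGraph V) (x : V) : SimpleGraph {u : V // u ≠ x} :=
  SimpleGraph.comap Subtype.val G

/-- `G` is a hypo-unique-domination graph: `G` has at least two γ-sets,
but `G - x` has a unique γ-set for every vertex `x`. -/
def HypoUD (G : SimpleGraph V) : Prop :=
  (∃ D₁ D₂ : Finset V, IsGammaSet G D₁ ∧ IsGammaSet G D₂ ∧ D₁ ≠ D₂) ∧
  ∀ x : V, ∃! D : Finset {u : V // u ≠ x}, IsGammaSet (vdel G x) D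

/-- `D` is an efficient dominating set of `G`: every vertex is dominated exactly once. -/
def IsEDS (G : SimpleGraph V) (D : Finset V) : Prop :=
  ∀ v : V, ∃! u : V, u ∈ D ∧ (u = v ∨ G.Adj u v)

/-- `G` is a hypo-efficient-domination graph: `G` has no EDS,
but `G - x` has an EDS for every vertex `x`. -/
def HypoED (G : SimpleGraph V) : Prop :=
  (¬ ∃ D : Finset V, IsEDS G D) ∧
  ∀ x : V, ∃ D : Finset {u : V // u ≠ x}, IsEDS (vdel G x) D

/-- The complete graph on `2 * m` vertices minus a perfect matching:
vertices are pairs `(i, j)` with `i : Fin m`, and two vertices are adjacent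
iff their first coordinates differ (the matching pairs `(i,0)(i,1)` are the
deleted edges). -/
def completeMinusPM (m : ℕ) : SimpleGraph (Fin m × Fin 2) where
  Adj a b := a.1 ≠ b.1
  symm := ⟨fun _ _ h => h.symm⟩
  loopless := ⟨fun _ h => h rfl⟩

set_option linter.unusedSectionVars false

section Basic
variable {W : Type*} [Fintype W] (H : SimpleGraph W)
lemma isDomSet_univ : IsDomSet H Finset.univ := fun v => ⟨v, Finset.mem_univ v, Or.inl rfl⟩
lemma exists_gammaSet : ∃ D : Finset W, IsDomSet H D ∧ D.card = domNum H :=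
  Nat.sInf_mem (⟨Finset.univ.card, Finset.univ, isDomSet_univ H, rfl⟩ :
    {n | ∃ D : Finset W, IsDomSet H D ∧ D.card = n}.Nonempty)
lemma domNum_le {D : Finset W} (hD : IsDomSet H D) : domNum H ≤ D.card :=
  Nat.sInf_le ⟨D, hD, rfl⟩
end Basic
section VdelBasic
variable [DecidableEq V] (G : SimpleGraph V) (x : V)
lemma vdel_adj {a b : {u : V // u ≠ x}} : (vdel G x).Adj a b ↔ G.Adj a.val b.val := Iff.rfl
lemma exists_not_mem [Fintype V] (s : Finset V) (h : s.card < Fintype.card V) :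
    ∃ y : V, y ∉ s := by
  by_contra h'
  push_neg at h'
  have hs : (Finset.univ : Finset V) ⊆ s := fun y _ => h' y
  have := Finset.card_le_card hs
  simp only [Finset.card_univ] at this
  omega
variable {G x}
lemma domset_subtype {E : Finset V} (hE : IsDomSet G E) (hx : x ∉ E) :
    IsDomSet (vdel G x) (E.subtype (· ≠ x)) := by
  intro v
  obtain ⟨u, hu, h⟩ := hE v.val
  have hux : u ≠ x := fun h => hx (h ▸ hu)
  refine ⟨⟨u, hux⟩, Finset.mem_subtype.2 hu, ?_⟩
  rcases h with h | h
  · exact Or.inl (Subtype.ext h)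
  · exact Or.inr h
lemma card_subtype_of_not_mem {E : Finset V} (hx : x ∉ E) :
    (E.subtype (· ≠ x)).card = E.card := by
  rw [Finset.card_subtype, Finset.filter_true_of_mem]
  intro u hu h
  exact hx (h ▸ hu)
lemma subtype_inj {E₁ E₂ : Finset V} (hx₁ : x ∉ E₁) (hx₂ : x ∉ E₂)
    (h : E₁.subtype (· ≠ x) = E₂.subtype (· ≠ x)) : E₁ = E₂ := by
  ext u
  by_cases hu : u = x
  · subst hu; simp [hx₁, hx₂]
  · constructor
    · intro hm
      have : (⟨u, hu⟩ : {u : V // u ≠ x}) ∈ E₁.subtype (· ≠ x) := Finset.mem_subtype.2 hm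
      rw [h] at this
      exact Finset.mem_subtype.1 this
    · intro hm
      have : (⟨u, hu⟩ : {u : V // u ≠ x}) ∈ E₂.subtype (· ≠ x) := Finset.mem_subtype.2 hm
      rw [← h] at this
      exact Finset.mem_subtype.1 this
lemma vdel_domNum_ne_zero [Fintype V] (G : SimpleGraph V) (x : V) (v : V) (hv : v ≠ x) :
    domNum (vdel G x) ≠ 0 := by
  intro h0
  obtain ⟨D, hD, hcard⟩ := exists_gammaSet (vdel G x)
  rw [h0, Finset.card_eq_zero] at hcard
  obtain ⟨u, hu, -⟩ := hD ⟨v, hv⟩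
  simp [hcard] at hu
end VdelBasic

section Two
variable [Fintype V] [DecidableEq V] {G : SimpleGraph V}

/-- If `u` is adjacent to everything except possibly `x`, and `domNum G = 2`,
then `u` is not adjacent to `x` (else `u` would be a dominating vertex). -/
lemma not_adj_of_almost (h2 : domNum G = 2) {u x : V}
    (hdom : ∀ w, w ≠ u → w ≠ x → G.Adj u w) : ¬ G.Adj u x := by
  intro hadj
  have : IsDomSet G {u} := by
    intro v
    refine ⟨u, Finset.mem_singleton_self u, ?_⟩
    by_cases hv : v = u
    · exact Or.inl hv.symm
    · by_cases hvx : v = x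
      · exact Or.inr (hvx ▸ hadj)
      · exact Or.inr (hdom v hv hvx)
  have := domNum_le G this
  simp [h2] at this

/-- γ(G) = 2 means every vertex has a non-neighbour. -/
lemma exists_nonnbr (h2 : domNum G = 2) (u : V) : ∃ z, z ≠ u ∧ ¬ G.Adj u z := by
  by_contra h
  push_neg at h
  have : IsDomSet G {u} := by
    intro v
    refine ⟨u, Finset.mem_singleton_self u, ?_⟩
    by_cases hv : v = u
    · exact Or.inl hv.symm
    · exact Or.inr (h v hv)
  have := domNum_le G this
  simp [h2] at this

/-- Key pivot lemma: if `G - x` has a unique γ-set but `G` has two distinct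
2-element dominating sets avoiding `x`, then there is a vertex whose unique
non-neighbour is `x`. -/
lemma lemL (h2 : domNum G = 2) {x : V}
    (hx : ∃! D : Finset {u : V // u ≠ x}, IsGammaSet (vdel G x) D)
    {E₁ E₂ : Finset V} (h₁ : IsDomSet G E₁) (c₁ : E₁.card = 2) (hx₁ : x ∉ E₁)
    (hd₂ : IsDomSet G E₂) (c₂ : E₂.card = 2) (hx₂ : x ∉ E₂) (hne : E₁ ≠ E₂) :
    ∃ u, u ≠ x ∧ ¬ G.Adj u x ∧ ∀ w, w ≠ u → w ≠ x → G.Adj u w := by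
  by_cases hdom : ∃ u, u ≠ x ∧ ∀ w, w ≠ u → w ≠ x → G.Adj u w
  · obtain ⟨u, hu, h3⟩ := hdom
    exact ⟨u, hu, not_adj_of_almost h2 h3, h3⟩
  · exfalso
    push_neg at hdom
    -- a vertex different from x
    obtain ⟨u₀, hu₀⟩ := Finset.card_pos.1 (by omega : 0 < E₁.card)
    have hu₀x : u₀ ≠ x := fun h => hx₁ (h ▸ hu₀)
    -- the two subtype sets are γ-sets of vdel G x
    have hS₁ : IsDomSet (vdel G x) (E₁.subtype (· ≠ x)) := domset_subtype h₁ hx₁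
    have hS₂ : IsDomSet (vdel G x) (E₂.subtype (· ≠ x)) := domset_subtype hd₂ hx₂
    have hc₁ : (E₁.subtype (· ≠ x)).card = 2 := by rw [card_subtype_of_not_mem hx₁, c₁]
    have hc₂ : (E₂.subtype (· ≠ x)).card = 2 := by rw [card_subtype_of_not_mem hx₂, c₂]
    have hdn : domNum (vdel G x) = 2 := by
      have hle : domNum (vdel G x) ≤ 2 := by
        have := domNum_le (vdel G x) hS₁; omega
      obtain ⟨D, hD, hcard⟩ := exists_gammaSet (vdel G x)
      have h0 : domNum (vdel G x) ≠ 0 := vdel_domNum_ne_zero G x u₀ hu₀x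
      rcases Nat.lt_or_ge (domNum (vdel G x)) 2 with hlt | hge
      · exfalso
        have h1 : domNum (vdel G x) = 1 := by omega
        rw [h1, Finset.card_eq_one] at hcard
        obtain ⟨s, rfl⟩ := hcard
        obtain ⟨w, hw, hwx, hnadj⟩ := hdom s.val s.prop
        obtain ⟨t, ht, hts⟩ := hD ⟨w, hwx⟩
        rw [Finset.mem_singleton] at ht
        subst ht
        rcases hts with h | h
        · exact hw (congrArg Subtype.val h).symm
        · exact hnadj h
      · omega
    have hg₁ : IsGammaSet (vdel G x) (E₁.subtype (· ≠ x)) := ⟨hS₁, by rw [hc₁, hdn]⟩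
    have hg₂ : IsGammaSet (vdel G x) (E₂.subtype (· ≠ x)) := ⟨hS₂, by rw [hc₂, hdn]⟩
    obtain ⟨D, -, huniq⟩ := hx
    have := (huniq _ hg₁).trans (huniq _ hg₂).symm
    exact hne (subtype_inj hx₁ hx₂ this)

/-- Pair domination: if `u` is adjacent to everything except `y`, and `w`
covers `y`, then `{u, w}` dominates. -/
lemma pairdom {u y : V} (huy : u ≠ y) (hu : ∀ w, w ≠ u → w ≠ y → G.Adj u w)
    {w : V} (hw : w = y ∨ G.Adj w y) : IsDomSet G {u, w} := by
  intro v
  by_cases hvu : v = u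
  · exact ⟨u, by simp, Or.inl hvu.symm⟩
  · by_cases hvw : v = w
    · exact ⟨w, by simp, Or.inl hvw.symm⟩
    · by_cases hvy : v = y
      · subst hvy
        rcases hw with h | h
        · exact absurd h.symm hvw
        · exact ⟨w, by simp, Or.inr h⟩
      · exact ⟨u, by simp, Or.inr (hu v hvu hvy)⟩

end Two
section Partner
variable [Fintype V] [DecidableEq V] {G : SimpleGraph V}

lemma not_mem_pair {a u y : V} (h1 : u ≠ a) (h2 : y ≠ a) : a ∉ ({u, y} : Finset V) := by
  simp only [Finset.mem_insert, Finset.mem_singleton]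
  push_neg
  exact ⟨fun h => h1 h.symm, fun h => h2 h.symm⟩

lemma other_elt {D : Finset V} {x : V} (hc : D.card = 2) (hx : x ∈ D) :
    ∃ w, w ≠ x ∧ D = {x, w} := by
  obtain ⟨a, b, hab, rfl⟩ := Finset.card_eq_two.1 hc
  rcases Finset.mem_insert.1 hx with h | h
  · subst h; exact ⟨b, Ne.symm hab, rfl⟩
  · rw [Finset.mem_singleton] at h; subst h
    exact ⟨a, hab, Finset.pair_comm a x⟩

lemma card_triple_le (a b c : V) : ({a, b, c} : Finset V).card ≤ 3 := by
  have h1 := Finset.card_insert_le a ({b, c} : Finset V)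
  have h2 := Finset.card_insert_le b ({c} : Finset V)
  simp only [Finset.card_singleton] at h2
  omega

lemma card_quad_le (a b c d : V) : ({a, b, c, d} : Finset V).card ≤ 4 := by
  have h1 := Finset.card_insert_le a ({b, c, d} : Finset V)
  have h2 := card_triple_le b c d
  omega

lemma partner_exists (h2 : domNum G = 2) (hud : HypoUD G) (x₀ : V) :
    ∃ u, u ≠ x₀ ∧ ¬ G.Adj u x₀ ∧ ∀ w, w ≠ u → w ≠ x₀ → G.Adj u w := by
  obtain ⟨⟨D₁, D₂, hD₁, hD₂, hDne⟩, hUniq⟩ := hud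
  have cD₁ : D₁.card = 2 := by rw [hD₁.2, h2]
  have cD₂ : D₂.card = 2 := by rw [hD₂.2, h2]
  have dD₁ := hD₁.1
  have dD₂ := hD₂.1
  by_contra hP
  have F1 : ∀ E₁ E₂ : Finset V, IsDomSet G E₁ → E₁.card = 2 → x₀ ∉ E₁ →
      IsDomSet G E₂ → E₂.card = 2 → x₀ ∉ E₂ → E₁ = E₂ := by
    intro E₁ E₂ a b c d e f
    by_contra hne
    exact hP (lemL h2 (hUniq x₀) a b c d e f hne)
  have hcard3 : 3 ≤ Fintype.card V := by
    have hns : ¬ D₁ ⊆ D₂ := by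
      intro hsub
      exact hDne (Finset.eq_of_subset_of_card_le hsub (by omega))
    obtain ⟨a, haD₁, haD₂⟩ := Finset.not_subset.1 hns
    have h1 : (insert a D₂).card = 3 := by rw [Finset.card_insert_of_notMem haD₂, cD₂]
    have := Finset.card_le_card (Finset.subset_univ (insert a D₂))
    rw [h1, Finset.card_univ] at this
    exact this
  rcases Nat.lt_or_ge (Fintype.card V) 5 with hsmall | hbig
  · -- |V| = 3 or 4
    have hc : Fintype.card V = 3 ∨ Fintype.card V = 4 := by omega
    rcases hc with hc | hc
    · -- |V| = 3 : G must be empty, but then no 2-element dominating set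
      have noedge : ∀ p q : V, p ≠ q → ¬ G.Adj p q := by
        intro p q hpq hadj
        obtain ⟨x, hx⟩ := exists_not_mem {p, q} (by rw [Finset.card_pair hpq]; omega)
        have hpx : p ≠ x := fun h => hx (h ▸ Finset.mem_insert_self p {q})
        have hqx : q ≠ x := fun h => hx (h ▸ (by simp : q ∈ ({p, q} : Finset V)))
        have hall : ∀ v : V, v = x ∨ v = p ∨ v = q := by
          intro v
          by_contra hv
          push_neg at hv
          obtain ⟨h1, h2', h3⟩ := hv
          have hxpq : ({x, p, q} : Finset V).card = 3 := by
            rw [Finset.card_insert_of_notMem hx, Finset.card_pair hpq]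
          have hvn : v ∉ ({x, p, q} : Finset V) := by
            simp only [Finset.mem_insert, Finset.mem_singleton]
            push_neg
            exact ⟨h1, h2', h3⟩
          have h4 : (insert v ({x, p, q} : Finset V)).card = 4 := by
            rw [Finset.card_insert_of_notMem hvn, hxpq]
          have := Finset.card_le_card (Finset.subset_univ (insert v ({x, p, q} : Finset V)))
          rw [h4, Finset.card_univ, hc] at this
          omega
        have hsp : IsDomSet (vdel G x) {(⟨p, hpx⟩ : {u : V // u ≠ x})} := by
          intro v
          refine ⟨⟨p, hpx⟩, Finset.mem_singleton_self _, ?_⟩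
          rcases hall v.val with h | h | h
          · exact absurd h v.prop
          · exact Or.inl (Subtype.ext h.symm)
          · exact Or.inr (by rw [vdel_adj, h]; exact hadj)
        have hsq : IsDomSet (vdel G x) {(⟨q, hqx⟩ : {u : V // u ≠ x})} := by
          intro v
          refine ⟨⟨q, hqx⟩, Finset.mem_singleton_self _, ?_⟩
          rcases hall v.val with h | h | h
          · exact absurd h v.prop
          · exact Or.inr (by rw [vdel_adj, h]; exact hadj.symm)
          · exact Or.inl (Subtype.ext h.symm)
        have hdn : domNum (vdel G x) = 1 := by
          have hle := domNum_le (vdel G x) hsp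
          simp only [Finset.card_singleton] at hle
          have := vdel_domNum_ne_zero G x p hpx
          omega
        obtain ⟨D, -, huniq⟩ := hUniq x
        have e₁ := huniq _ ⟨hsp, by simp [hdn]⟩
        have e₂ := huniq _ ⟨hsq, by simp [hdn]⟩
        have := Finset.singleton_inj.1 (e₁.trans e₂.symm)
        exact hpq (congrArg Subtype.val this)
      obtain ⟨v, hv⟩ := exists_not_mem D₁ (by omega)
      obtain ⟨u, hu, h⟩ := dD₁ v
      rcases h with h | h
      · exact hv (h ▸ hu)
      · exact noedge u v (G.ne_of_adj h) h
    · -- |V| = 4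
      by_cases b1 : ∃ u, u ≠ x₀ ∧ ∀ w, w ≠ u → w ≠ x₀ → G.Adj u w
      · obtain ⟨u, hu, hdom⟩ := b1
        exact hP ⟨u, hu, not_adj_of_almost h2 hdom, hdom⟩
      · by_cases b2 : ∃ p q, p ≠ x₀ ∧ q ≠ x₀ ∧ p ≠ q ∧ G.Adj p q
        · obtain ⟨p, q, hpx, hqx, hpq, hadj⟩ := b2
          have hx₀pq : x₀ ∉ ({p, q} : Finset V) := not_mem_pair hpx hqx
          have hcpq : ({x₀, p, q} : Finset V).card = 3 := by
            rw [Finset.card_insert_of_notMem hx₀pq, Finset.card_pair hpq]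
          obtain ⟨r, hr⟩ := exists_not_mem {x₀, p, q} (by omega)
          simp only [Finset.mem_insert, Finset.mem_singleton] at hr
          push_neg at hr
          obtain ⟨hrx, hrp, hrq⟩ := hr
          have hall : ∀ v : V, v = x₀ ∨ v = p ∨ v = q ∨ v = r := by
            intro v
            by_contra hv
            push_neg at hv
            obtain ⟨h1, h2', h3, h4⟩ := hv
            have hrn : r ∉ ({x₀, p, q} : Finset V) := by
              simp only [Finset.mem_insert, Finset.mem_singleton]
              push_neg
              exact ⟨hrx, hrp, hrq⟩
            have hc4 : (insert r ({x₀, p, q} : Finset V)).card = 4 := by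
              rw [Finset.card_insert_of_notMem hrn, hcpq]
            have hvn : v ∉ insert r ({x₀, p, q} : Finset V) := by
              simp only [Finset.mem_insert, Finset.mem_singleton]
              push_neg
              exact ⟨h4, h1, h2', h3⟩
            have hc5 : (insert v (insert r ({x₀, p, q} : Finset V))).card = 5 := by
              rw [Finset.card_insert_of_notMem hvn, hc4]
            have := Finset.card_le_card
              (Finset.subset_univ (insert v (insert r ({x₀, p, q} : Finset V))))
            rw [hc5, Finset.card_univ, hc] at this
            omega
          have hS₁ : IsDomSet (vdel G x₀)
              {(⟨p, hpx⟩ : {u : V // u ≠ x₀}), ⟨r, hrx⟩} := by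
            intro v
            rcases hall v.val with h | h | h | h
            · exact absurd h v.prop
            · exact ⟨⟨p, hpx⟩, by simp, Or.inl (Subtype.ext h.symm)⟩
            · exact ⟨⟨p, hpx⟩, by simp, Or.inr (by rw [vdel_adj, h]; exact hadj)⟩
            · exact ⟨⟨r, hrx⟩, by simp, Or.inl (Subtype.ext h.symm)⟩
          have hS₂ : IsDomSet (vdel G x₀)
              {(⟨q, hqx⟩ : {u : V // u ≠ x₀}), ⟨r, hrx⟩} := by
            intro v
            rcases hall v.val with h | h | h | h
            · exact absurd h v.prop
            · exact ⟨⟨q, hqx⟩, by simp, Or.inr (by rw [vdel_adj, h]; exact hadj.symm)⟩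
            · exact ⟨⟨q, hqx⟩, by simp, Or.inl (Subtype.ext h.symm)⟩
            · exact ⟨⟨r, hrx⟩, by simp, Or.inl (Subtype.ext h.symm)⟩
          have hpr : (⟨p, hpx⟩ : {u : V // u ≠ x₀}) ≠ ⟨r, hrx⟩ :=
            fun hh => hrp (congrArg Subtype.val hh).symm
          have hqr : (⟨q, hqx⟩ : {u : V // u ≠ x₀}) ≠ ⟨r, hrx⟩ :=
            fun hh => hrq (congrArg Subtype.val hh).symm
          have hc₁ : ({(⟨p, hpx⟩ : {u : V // u ≠ x₀}), ⟨r, hrx⟩} : Finset {u : V // u ≠ x₀}).card = 2 :=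
            Finset.card_pair hpr
          have hc₂ : ({(⟨q, hqx⟩ : {u : V // u ≠ x₀}), ⟨r, hrx⟩} : Finset {u : V // u ≠ x₀}).card = 2 :=
            Finset.card_pair hqr
          have hdn : domNum (vdel G x₀) = 2 := by
            have hle := domNum_le (vdel G x₀) hS₁
            rw [hc₁] at hle
            have h0 := vdel_domNum_ne_zero G x₀ p hpx
            rcases Nat.lt_or_ge (domNum (vdel G x₀)) 2 with hlt | hge
            · exfalso
              obtain ⟨D, hD, hcard⟩ := exists_gammaSet (vdel G x₀)
              have h1 : domNum (vdel G x₀) = 1 := by omega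
              rw [h1, Finset.card_eq_one] at hcard
              obtain ⟨s, rfl⟩ := hcard
              refine b1 ⟨s.val, s.prop, ?_⟩
              intro w hw hwx
              obtain ⟨t, ht, hts⟩ := hD ⟨w, hwx⟩
              rw [Finset.mem_singleton] at ht
              subst ht
              rcases hts with h | h
              · exact absurd (congrArg Subtype.val h).symm hw
              · exact h
            · omega
          obtain ⟨D, -, huniq⟩ := hUniq x₀
          have e₁ := huniq {(⟨p, hpx⟩ : {u : V // u ≠ x₀}), ⟨r, hrx⟩} ⟨hS₁, by rw [hc₁, hdn]⟩
          have e₂ := huniq {(⟨q, hqx⟩ : {u : V // u ≠ x₀}), ⟨r, hrx⟩} ⟨hS₂, by rw [hc₂, hdn]⟩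
          have heq := e₁.trans e₂.symm
          have hpmem : (⟨p, hpx⟩ : {u : V // u ≠ x₀}) ∈
              ({(⟨q, hqx⟩ : {u : V // u ≠ x₀}), ⟨r, hrx⟩} : Finset _) := by
            rw [← heq]; simp
          rcases Finset.mem_insert.1 hpmem with h | h
          · exact hpq (congrArg Subtype.val h)
          · exact hrp (congrArg Subtype.val (Finset.mem_singleton.1 h)).symm
        · push_neg at b2
          have hmem : ∀ D : Finset V, IsDomSet G D → D.card = 2 → x₀ ∈ D := by
            intro D hD hc2
            by_contra hx₀D
            have hci : (insert x₀ D).card = 3 := by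
              rw [Finset.card_insert_of_notMem hx₀D, hc2]
            obtain ⟨v, hv⟩ := exists_not_mem (insert x₀ D) (by omega)
            have hvx : v ≠ x₀ := fun h => hv (h ▸ Finset.mem_insert_self _ _)
            have hvD : v ∉ D := fun h => hv (Finset.mem_insert_of_mem h)
            obtain ⟨w, hw, h⟩ := hD v
            rcases h with h | h
            · exact hvD (h ▸ hw)
            · have hwx : w ≠ x₀ := fun hh => hx₀D (hh ▸ hw)
              exact b2 w v hwx hvx (G.ne_of_adj h) h
          obtain ⟨w₁, hw₁, hD₁e⟩ := other_elt cD₁ (hmem D₁ dD₁ cD₁)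
          obtain ⟨w₂, hw₂, hD₂e⟩ := other_elt cD₂ (hmem D₂ dD₂ cD₂)
          have hww : w₁ ≠ w₂ := by
            rintro rfl
            exact hDne (hD₁e.trans hD₂e.symm)
          have hdomx₀ : IsDomSet G {x₀} := by
            intro v
            refine ⟨x₀, Finset.mem_singleton_self _, ?_⟩
            by_cases hv : v = x₀
            · exact Or.inl hv.symm
            · refine Or.inr ?_
              by_cases hv1 : v = w₁
              · obtain ⟨d, hd, h⟩ := dD₂ v
                rw [hD₂e] at hd
                rcases Finset.mem_insert.1 hd with h' | h'
                · subst h'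
                  rcases h with h | h
                  · exact absurd h.symm hv
                  · exact h
                · rw [Finset.mem_singleton] at h'
                  rw [h'] at h
                  rcases h with h | h
                  · exact absurd (h.trans hv1).symm hww
                  · exact absurd h (b2 w₂ v hw₂ hv (fun hh => hww (hh.trans hv1).symm))
              · obtain ⟨d, hd, h⟩ := dD₁ v
                rw [hD₁e] at hd
                rcases Finset.mem_insert.1 hd with h' | h'
                · subst h'
                  rcases h with h | h
                  · exact absurd h.symm hv
                  · exact h
                · rw [Finset.mem_singleton] at h'
                  rw [h'] at h
                  rcases h with h | h
                  · exact absurd h.symm hv1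
                  · exact absurd h (b2 w₁ v hw₁ hv (fun hh => hv1 hh.symm))
          have := domNum_le G hdomx₀
          rw [Finset.card_singleton, h2] at this
          omega
  · -- |V| ≥ 5
    have F3' : ∀ u y, u ≠ x₀ → y ≠ x₀ → u ≠ y → ¬ G.Adj u y →
        (∀ w, w ≠ u → w ≠ y → G.Adj u w) → ∀ w, G.Adj w y → w = x₀ := by
      intro u y hux hyx huy hnadj hdom w hwy
      by_contra hwx
      have hwu : w ≠ u := fun h => hnadj (h ▸ hwy)
      have hwyne : w ≠ y := G.ne_of_adj hwy
      have S1 : IsDomSet G {u, y} := pairdom huy hdom (Or.inl rfl)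
      have S2 : IsDomSet G {u, w} := pairdom huy hdom (Or.inr hwy)
      have heq := F1 _ _ S1 (Finset.card_pair huy) (not_mem_pair hux hyx)
        S2 (Finset.card_pair (Ne.symm hwu)) (not_mem_pair hux hwx)
      have hy : y ∈ ({u, w} : Finset V) := by rw [← heq]; simp
      rcases Finset.mem_insert.1 hy with h | h
      · exact huy h.symm
      · exact hwyne (Finset.mem_singleton.1 h).symm
    by_cases hsing : ∃ xb, xb ≠ x₀ ∧ ¬ G.Adj x₀ xb ∧ ∀ z, z ≠ x₀ → z ≠ xb → G.Adj x₀ z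
    · -- Case II : x₀ has exactly one non-neighbour xb
      obtain ⟨xb, hxb, hnadj0, hdom0⟩ := hsing
      have hx0xb : x₀ ≠ xb := fun h => hxb h.symm
      have base : IsDomSet G {x₀, xb} := pairdom hx0xb hdom0 (Or.inl rfl)
      have cbase : ({x₀, xb} : Finset V).card = 2 := Finset.card_pair hx0xb
      have subA : ∀ t t', t ≠ x₀ → t ≠ xb → t' ≠ x₀ → t' ≠ xb → t ≠ t' →
          (∃ u, u ≠ t ∧ ¬ G.Adj u t ∧ ∀ w, w ≠ u → w ≠ t → G.Adj u w) →
          (∃ u, u ≠ t' ∧ ¬ G.Adj u t' ∧ ∀ w, w ≠ u → w ≠ t' → G.Adj u w) → False := by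
        intro t t' htx htb ht'x ht'b htt' ⟨u, hut, hnut, hu⟩ ⟨u', hut', hnut', hu'⟩
        have hux : u ≠ x₀ := by
          intro h
          subst h
          exact hnadj0 (hu xb hxb (fun hh => htb hh.symm))
        have hu'x : u' ≠ x₀ := by
          intro h
          subst h
          exact hnadj0 (hu' xb hxb (fun hh => ht'b hh.symm))
        have Nt' : ∀ w, G.Adj w t' → w = x₀ := F3' u' t' hu'x ht'x hut' hnut' hu'
        have heq := F1 _ _ (pairdom hut hu (Or.inl rfl)) (Finset.card_pair hut)
          (not_mem_pair hux htx)
          (pairdom hut' hu' (Or.inl rfl)) (Finset.card_pair hut')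
          (not_mem_pair hu'x ht'x)
        have ht'mem : t' ∈ ({u, t} : Finset V) := by rw [heq]; simp
        rcases Finset.mem_insert.1 ht'mem with h | h
        · -- t' = u
          have hxbu : xb ≠ u := by rw [← h]; exact fun hh => ht'b hh.symm
          have hadj : G.Adj u xb := hu xb hxbu (fun hh => htb hh.symm)
          have : G.Adj xb t' := by rw [h]; exact hadj.symm
          exact hxb (Nt' xb this)
        · exact htt' (Finset.mem_singleton.1 h).symm
      have hbfact : ∀ t, t ≠ x₀ → t ≠ xb →
          (¬ ∃ u, u ≠ t ∧ ¬ G.Adj u t ∧ ∀ w, w ≠ u → w ≠ t → G.Adj u w) →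
          ∀ w, G.Adj w xb → w = t := by
        intro t htx htb hnot w hw
        by_contra hwt
        have hwx : w ≠ x₀ := by
          intro h
          subst h
          exact hnadj0 hw
        have hwxb : w ≠ xb := G.ne_of_adj hw
        have S2 : IsDomSet G {x₀, w} := pairdom hx0xb hdom0 (Or.inr hw)
        have hne2 : ({x₀, xb} : Finset V) ≠ {x₀, w} := by
          intro h
          have : xb ∈ ({x₀, w} : Finset V) := by rw [← h]; simp
          rcases Finset.mem_insert.1 this with h' | h'
          · exact hxb h'
          · exact hwxb (Finset.mem_singleton.1 h').symm
        exact hnot (lemL h2 (hUniq t) base cbase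
          (not_mem_pair (Ne.symm htx) (Ne.symm htb))
          S2 (Finset.card_pair (fun h => hwx h.symm))
          (not_mem_pair (Ne.symm htx) hwt) hne2)
      have subB : ∀ t t', t ≠ x₀ → t ≠ xb → t' ≠ x₀ → t' ≠ xb → t ≠ t' →
          (¬ ∃ u, u ≠ t ∧ ¬ G.Adj u t ∧ ∀ w, w ≠ u → w ≠ t → G.Adj u w) →
          (¬ ∃ u, u ≠ t' ∧ ¬ G.Adj u t' ∧ ∀ w, w ≠ u → w ≠ t' → G.Adj u w) → False := by
        intro t t' htx htb ht'x ht'b htt' hb hb'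
        have hh1 := hbfact t htx htb hb
        have hh2 := hbfact t' ht'x ht'b hb'
        have hnoadj : ∀ w, ¬ G.Adj w xb := by
          intro w hw
          exact htt' ((hh1 w hw).symm.trans (hh2 w hw))
        have hmem : ∀ D : Finset V, IsDomSet G D → xb ∈ D := by
          intro D hD
          obtain ⟨u, hu, h⟩ := hD xb
          rcases h with h | h
          · exact h ▸ hu
          · exact absurd h (hnoadj u)
        obtain ⟨w₁, hw₁, hD₁e⟩ := other_elt cD₁ (hmem D₁ dD₁)
        obtain ⟨w₂, hw₂, hD₂e⟩ := other_elt cD₂ (hmem D₂ dD₂)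
        have hww : w₁ ≠ w₂ := by
          rintro rfl
          exact hDne (hD₁e.trans hD₂e.symm)
        have hall₁ : ∀ v, v ≠ w₁ → v ≠ xb → G.Adj w₁ v := by
          intro v hv1 hvb
          obtain ⟨u, hu, h⟩ := dD₁ v
          rw [hD₁e] at hu
          rcases Finset.mem_insert.1 hu with h' | h'
          · rw [h'] at h
            rcases h with h | h
            · exact absurd h.symm hvb
            · exact absurd h.symm (hnoadj v)
          · rw [Finset.mem_singleton] at h'
            rw [h'] at h
            rcases h with h | h
            · exact absurd h.symm hv1
            · exact h
        have hall₂ : ∀ v, v ≠ w₂ → v ≠ xb → G.Adj w₂ v := by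
          intro v hv1 hvb
          obtain ⟨u, hu, h⟩ := dD₂ v
          rw [hD₂e] at hu
          rcases Finset.mem_insert.1 hu with h' | h'
          · rw [h'] at h
            rcases h with h | h
            · exact absurd h.symm hvb
            · exact absurd h.symm (hnoadj v)
          · rw [Finset.mem_singleton] at h'
            rw [h'] at h
            rcases h with h | h
            · exact absurd h.symm hv1
            · exact h
        have hs₁ : IsDomSet (vdel G xb) {(⟨w₁, hw₁⟩ : {u : V // u ≠ xb})} := by
          intro v
          refine ⟨⟨w₁, hw₁⟩, Finset.mem_singleton_self _, ?_⟩
          by_cases hv : v.val = w₁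
          · exact Or.inl (Subtype.ext hv.symm)
          · exact Or.inr (hall₁ v.val hv v.prop)
        have hs₂ : IsDomSet (vdel G xb) {(⟨w₂, hw₂⟩ : {u : V // u ≠ xb})} := by
          intro v
          refine ⟨⟨w₂, hw₂⟩, Finset.mem_singleton_self _, ?_⟩
          by_cases hv : v.val = w₂
          · exact Or.inl (Subtype.ext hv.symm)
          · exact Or.inr (hall₂ v.val hv v.prop)
        have hdn : domNum (vdel G xb) = 1 := by
          have hle := domNum_le (vdel G xb) hs₁
          simp only [Finset.card_singleton] at hle
          have := vdel_domNum_ne_zero G xb w₁ hw₁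
          omega
        obtain ⟨D, -, huniq⟩ := hUniq xb
        have e₁ := huniq {(⟨w₁, hw₁⟩ : {u : V // u ≠ xb})} ⟨hs₁, by simp [hdn]⟩
        have e₂ := huniq {(⟨w₂, hw₂⟩ : {u : V // u ≠ xb})} ⟨hs₂, by simp [hdn]⟩
        have := Finset.singleton_inj.1 (e₁.trans e₂.symm)
        exact hww (congrArg Subtype.val this)
      -- pick three vertices outside {x₀, xb}
      obtain ⟨t₁, ht₁⟩ := exists_not_mem {x₀, xb} (by rw [cbase]; omega)
      have hc3 : ({x₀, xb, t₁} : Finset V).card ≤ 3 := card_triple_le _ _ _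
      obtain ⟨t₂, ht₂⟩ := exists_not_mem {x₀, xb, t₁} (by omega)
      have hc4 : ({x₀, xb, t₁, t₂} : Finset V).card ≤ 4 := card_quad_le _ _ _ _
      obtain ⟨t₃, ht₃⟩ := exists_not_mem {x₀, xb, t₁, t₂} (by omega)
      simp only [Finset.mem_insert, Finset.mem_singleton] at ht₁ ht₂ ht₃
      push_neg at ht₁ ht₂ ht₃
      obtain ⟨h1x, h1b⟩ := ht₁
      obtain ⟨h2x, h2b, h21⟩ := ht₂
      obtain ⟨h3x, h3b, h31, h32⟩ := ht₃
      by_cases p1 : ∃ u, u ≠ t₁ ∧ ¬ G.Adj u t₁ ∧ ∀ w, w ≠ u → w ≠ t₁ → G.Adj u w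
      · by_cases p2 : ∃ u, u ≠ t₂ ∧ ¬ G.Adj u t₂ ∧ ∀ w, w ≠ u → w ≠ t₂ → G.Adj u w
        · exact subA t₁ t₂ h1x h1b h2x h2b (fun h => h21 h.symm) p1 p2
        · by_cases p3 : ∃ u, u ≠ t₃ ∧ ¬ G.Adj u t₃ ∧ ∀ w, w ≠ u → w ≠ t₃ → G.Adj u w
          · exact subA t₁ t₃ h1x h1b h3x h3b (fun h => h31 h.symm) p1 p3
          · exact subB t₂ t₃ h2x h2b h3x h3b (fun h => h32 h.symm) p2 p3
      · by_cases p2 : ∃ u, u ≠ t₂ ∧ ¬ G.Adj u t₂ ∧ ∀ w, w ≠ u → w ≠ t₂ → G.Adj u w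
        · by_cases p3 : ∃ u, u ≠ t₃ ∧ ¬ G.Adj u t₃ ∧ ∀ w, w ≠ u → w ≠ t₃ → G.Adj u w
          · exact subA t₂ t₃ h2x h2b h3x h3b (fun h => h32 h.symm) p2 p3
          · exact subB t₁ t₃ h1x h1b h3x h3b (fun h => h31 h.symm) p1 p3
        · exact subB t₁ t₂ h1x h1b h2x h2b (fun h => h21 h.symm) p1 p2
    · -- Case I : x₀ has at least two non-neighbours
      obtain ⟨z₁, hz₁u, hz₁a⟩ := exists_nonnbr h2 x₀
      push_neg at hsing
      obtain ⟨z₂, hz₂u, hz₂z₁, hz₂a⟩ := hsing z₁ hz₁u hz₁a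
      have unot : ∀ x u, u ≠ x → ¬ G.Adj u x →
          (∀ w, w ≠ u → w ≠ x → G.Adj u w) → u ≠ x₀ := by
        intro x u hux hnadj hdom h
        subst h
        have e₁ : z₁ = x := by
          by_contra hne
          exact hz₁a (hdom z₁ hz₁u hne)
        have e₂ : z₂ = x := by
          by_contra hne
          exact hz₂a (hdom z₂ hz₂u hne)
        exact hz₂z₁ (e₂.trans e₁.symm)
      by_cases m1 : x₀ ∈ D₁ <;> by_cases m2 : x₀ ∈ D₂
      · -- x₀ in both
        obtain ⟨a, ha, hD₁e⟩ := other_elt cD₁ m1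
        obtain ⟨b, hb, hD₂e⟩ := other_elt cD₂ m2
        have hab : a ≠ b := by
          rintro rfl
          exact hDne (hD₁e.trans hD₂e.symm)
        have hcab : ({x₀, a, b} : Finset V).card ≤ 3 := card_triple_le _ _ _
        obtain ⟨x, hx⟩ := exists_not_mem {x₀, a, b} (by omega)
        have hcabx : ({x₀, a, b, x} : Finset V).card ≤ 4 := card_quad_le _ _ _ _
        obtain ⟨x', hx'⟩ := exists_not_mem {x₀, a, b, x} (by omega)
        simp only [Finset.mem_insert, Finset.mem_singleton] at hx hx'
        push_neg at hx hx'
        obtain ⟨hxx₀, hxa, hxb2⟩ := hx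
        obtain ⟨hx'x₀, hx'a, hx'b, hx'x⟩ := hx'
        have hxD₁ : x ∉ D₁ := by rw [hD₁e]; exact not_mem_pair (Ne.symm hxx₀) (Ne.symm hxa)
        have hxD₂ : x ∉ D₂ := by rw [hD₂e]; exact not_mem_pair (Ne.symm hxx₀) (Ne.symm hxb2)
        have hx'D₁ : x' ∉ D₁ := by rw [hD₁e]; exact not_mem_pair (Ne.symm hx'x₀) (Ne.symm hx'a)
        have hx'D₂ : x' ∉ D₂ := by rw [hD₂e]; exact not_mem_pair (Ne.symm hx'x₀) (Ne.symm hx'b)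
        obtain ⟨u, hux, hnux, hudom⟩ := lemL h2 (hUniq x) dD₁ cD₁ hxD₁ dD₂ cD₂ hxD₂ hDne
        have hux₀ : u ≠ x₀ := unot x u hux hnux hudom
        obtain ⟨u', hux', hnux', hudom'⟩ := lemL h2 (hUniq x') dD₁ cD₁ hx'D₁ dD₂ cD₂ hx'D₂ hDne
        have hux₀' : u' ≠ x₀ := unot x' u' hux' hnux' hudom'
        have Nx' : ∀ w, G.Adj w x' → w = x₀ := F3' u' x' hux₀' hx'x₀ hux' hnux' hudom'
        have heq := F1 _ _ (pairdom hux hudom (Or.inl rfl)) (Finset.card_pair hux)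
          (not_mem_pair hux₀ hxx₀)
          (pairdom hux' hudom' (Or.inl rfl)) (Finset.card_pair hux')
          (not_mem_pair hux₀' hx'x₀)
        have hx'mem : x' ∈ ({u, x} : Finset V) := by rw [heq]; simp
        rcases Finset.mem_insert.1 hx'mem with h | h
        · -- x' = u
          have hau : a ≠ u := by rw [← h]; exact fun hh => hx'a hh.symm
          have hax : a ≠ x := fun hh => hxa hh.symm
          have hadj : G.Adj u a := hudom a hau hax
          have : G.Adj a x' := by rw [← h] at hadj; exact hadj.symm
          exact ha (Nx' a this)
        · exact hx'x (Finset.mem_singleton.1 h)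
      · -- x₀ ∈ D₁ only : D₂ avoids x₀
        have hcu : (D₁ ∪ D₂).card ≤ 4 := by
          have := Finset.card_union_le D₁ D₂
          omega
        obtain ⟨x, hx⟩ := exists_not_mem (D₁ ∪ D₂) (by omega)
        have hxD₁ : x ∉ D₁ := fun h => hx (Finset.mem_union_left _ h)
        have hxD₂ : x ∉ D₂ := fun h => hx (Finset.mem_union_right _ h)
        have hxx₀ : x ≠ x₀ := fun h => hxD₁ (h ▸ m1)
        obtain ⟨u, hux, hnux, hudom⟩ := lemL h2 (hUniq x) dD₁ cD₁ hxD₁ dD₂ cD₂ hxD₂ hDne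
        have hux₀ : u ≠ x₀ := unot x u hux hnux hudom
        have Nx : ∀ w, G.Adj w x → w = x₀ := F3' u x hux₀ hxx₀ hux hnux hudom
        obtain ⟨d, hd, h⟩ := dD₂ x
        rcases h with h | h
        · exact hxD₂ (h ▸ hd)
        · exact m2 ((Nx d h) ▸ hd)
      · -- x₀ ∈ D₂ only : D₁ avoids x₀
        have hcu : (D₁ ∪ D₂).card ≤ 4 := by
          have := Finset.card_union_le D₁ D₂
          omega
        obtain ⟨x, hx⟩ := exists_not_mem (D₁ ∪ D₂) (by omega)
        have hxD₁ : x ∉ D₁ := fun h => hx (Finset.mem_union_left _ h)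
        have hxD₂ : x ∉ D₂ := fun h => hx (Finset.mem_union_right _ h)
        have hxx₀ : x ≠ x₀ := fun h => hxD₂ (h ▸ m2)
        obtain ⟨u, hux, hnux, hudom⟩ := lemL h2 (hUniq x) dD₁ cD₁ hxD₁ dD₂ cD₂ hxD₂ hDne
        have hux₀ : u ≠ x₀ := unot x u hux hnux hudom
        have Nx : ∀ w, G.Adj w x → w = x₀ := F3' u x hux₀ hxx₀ hux hnux hudom
        obtain ⟨d, hd, h⟩ := dD₁ x
        rcases h with h | h
        · exact hxD₁ (h ▸ hd)
        · exact m1 ((Nx d h) ▸ hd)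
      · -- x₀ in neither
        exact hDne (F1 _ _ dD₁ cD₁ m1 dD₂ cD₂ m2)

end Partner
section Construct
variable [Fintype V] [DecidableEq V] {G : SimpleGraph V}

lemma partner_unique (hud : HypoUD G) (x : V) {u u' : V}
    (hu : u ≠ x ∧ ¬ G.Adj u x ∧ ∀ w, w ≠ u → w ≠ x → G.Adj u w)
    (hu' : u' ≠ x ∧ ¬ G.Adj u' x ∧ ∀ w, w ≠ u' → w ≠ x → G.Adj u' w) : u = u' := by
  obtain ⟨hux, hnux, hdomu⟩ := hu
  obtain ⟨hux', hnux', hdomu'⟩ := hu'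
  have hs : IsDomSet (vdel G x) {(⟨u, hux⟩ : {v : V // v ≠ x})} := by
    intro v
    refine ⟨⟨u, hux⟩, Finset.mem_singleton_self _, ?_⟩
    by_cases hv : v.val = u
    · exact Or.inl (Subtype.ext hv.symm)
    · exact Or.inr (hdomu v.val hv v.prop)
  have hs' : IsDomSet (vdel G x) {(⟨u', hux'⟩ : {v : V // v ≠ x})} := by
    intro v
    refine ⟨⟨u', hux'⟩, Finset.mem_singleton_self _, ?_⟩
    by_cases hv : v.val = u'
    · exact Or.inl (Subtype.ext hv.symm)
    · exact Or.inr (hdomu' v.val hv v.prop)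
  have hdn : domNum (vdel G x) = 1 := by
    have hle := domNum_le (vdel G x) hs
    simp only [Finset.card_singleton] at hle
    have := vdel_domNum_ne_zero G x u hux
    omega
  obtain ⟨D, -, huniq⟩ := hud.2 x
  have e₁ := huniq {(⟨u, hux⟩ : {v : V // v ≠ x})} ⟨hs, by simp [hdn]⟩
  have e₂ := huniq {(⟨u', hux'⟩ : {v : V // v ≠ x})} ⟨hs', by simp [hdn]⟩
  exact congrArg Subtype.val (Finset.singleton_inj.1 (e₁.trans e₂.symm))

lemma structure_of (h2 : domNum G = 2) (hud : HypoUD G) :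
    ∃ f : V → V, (∀ x, f x ≠ x) ∧ (∀ x, f (f x) = x) ∧
      (∀ x y, G.Adj x y ↔ (x ≠ y ∧ y ≠ f x)) := by
  choose f hf1 hf2 hf3 using partner_exists h2 hud
  have hinj : Function.Injective f := by
    intro x x' h
    by_contra hne
    have h1 : x' ≠ f x := by
      rw [h]
      exact fun hh => hf1 x' hh.symm
    have hadj := hf3 x x' h1 (fun hh => hne hh.symm)
    rw [h] at hadj
    exact hf2 x' hadj
  have hsurj : Function.Surjective f := Finite.surjective_of_injective hinj
  have hffx : ∀ x, f (f x) = x := by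
    intro x
    obtain ⟨y, hy⟩ := hsurj x
    have hfxy : f x = y := by
      by_contra hne
      have h1 : f x ≠ f y := by rw [hy]; exact hf1 x
      have hadj' := hf3 y (f x) h1 hne
      rw [hy] at hadj'
      exact hf2 x hadj'.symm
    rw [hfxy, hy]
  refine ⟨f, hf1, hffx, ?_⟩
  intro x y
  constructor
  · intro h
    refine ⟨G.ne_of_adj h, ?_⟩
    rintro rfl
    exact hf2 x h.symm
  · rintro ⟨hxy, hyfx⟩
    obtain ⟨z, hz⟩ := hsurj x
    have hfxz : f x = z := hinj (by rw [hffx x, hz])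
    have hadj := hf3 z y (by rw [hz]; exact fun hh => hxy hh.symm)
      (by rw [← hfxz]; exact hyfx)
    rw [hz] at hadj
    exact hadj

lemma iso_of_involution (f : V → V) (hf1 : ∀ x, f x ≠ x) (hf2 : ∀ x, f (f x) = x)
    (hadj : ∀ x y, G.Adj x y ↔ (x ≠ y ∧ y ≠ f x)) :
    ∃ m : ℕ, Fintype.card V = 2 * m ∧ Nonempty (G ≃g completeMinusPM m) := by
  classical
  let e₀ : V ≃ Fin (Fintype.card V) := Fintype.equivFin V
  let R : Finset V := Finset.univ.filter (fun x => e₀ x < e₀ (f x))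
  have hRmem : ∀ x, x ∈ R ↔ e₀ x < e₀ (f x) := by
    intro x
    simp [R]
  have hRf : ∀ x, x ∉ R → f x ∈ R := by
    intro x hx
    rw [hRmem] at hx ⊢
    rw [hf2]
    have hne : e₀ (f x) ≠ e₀ x := fun h => hf1 x (e₀.injective h)
    exact lt_of_le_of_ne (not_lt.mp hx) hne
  have hRfn : ∀ x, x ∈ R → f x ∉ R := by
    intro x hx hfx
    rw [hRmem] at hx hfx
    rw [hf2] at hfx
    exact absurd hx (not_lt.mpr hfx.le)
  set m := R.card with hm
  let eR : {x // x ∈ R} ≃ Fin m := R.equivFin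
  let rep : V → V := fun x => if x ∈ R then x else f x
  have hrepR : ∀ x, rep x ∈ R := by
    intro x
    by_cases h : x ∈ R
    · simpa [rep, h] using h
    · simpa [rep, h] using hRf x h
  let φ : V → Fin m × Fin 2 := fun x => (eR ⟨rep x, hrepR x⟩, if x ∈ R then 0 else 1)
  have hrep_iff : ∀ x y, rep x = rep y ↔ (y = x ∨ y = f x) := by
    intro x y
    constructor
    · intro h
      by_cases hx : x ∈ R <;> by_cases hy : y ∈ R <;> simp only [rep, hx, hy,
        if_true, if_false, ite_true, ite_false] at h
      · exact Or.inl h.symm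
      · right
        rw [h, hf2]
      · exact Or.inr h.symm
      · left
        have := congrArg f h
        rw [hf2, hf2] at this
        exact this.symm
    · rintro (rfl | rfl)
      · rfl
      · by_cases hx : x ∈ R
        · have hfx := hRfn x hx
          simp [rep, hx, hfx, hf2]
        · have hfx := hRf x hx
          simp [rep, hx, hfx]
  have hφfst : ∀ x y, (φ x).1 = (φ y).1 ↔ (y = x ∨ y = f x) := by
    intro x y
    rw [← hrep_iff]
    constructor
    · intro h
      exact congrArg Subtype.val (eR.injective h)
    · intro h
      show eR ⟨rep x, hrepR x⟩ = eR ⟨rep y, hrepR y⟩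
      congr 1
      exact Subtype.ext h
  have hφinj : Function.Injective φ := by
    intro x y h
    have h1 : rep x = rep y := by
      have hfst := congrArg Prod.fst h
      have := eR.injective hfst
      exact congrArg Subtype.val this
    have h2 := congrArg Prod.snd h
    simp only [φ] at h2
    rcases (hrep_iff x y).1 h1 with h3 | h3
    · exact h3.symm
    · exfalso
      subst h3
      by_cases hx : x ∈ R
      · have hfx := hRfn x hx
        rw [if_pos hx, if_neg hfx] at h2
        exact absurd h2 (by decide)
      · have hfx := hRf x hx
        rw [if_neg hx, if_pos hfx] at h2
        exact absurd h2 (by decide)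
  have hφsurj : Function.Surjective φ := by
    rintro ⟨i, j⟩
    have hvR : (eR.symm i).val ∈ R := (eR.symm i).prop
    set v := (eR.symm i).val with hv
    have hrepv : rep v = v := if_pos hvR
    by_cases hj : j = 0
    · refine ⟨v, ?_⟩
      have hsub : (⟨rep v, hrepR v⟩ : {x // x ∈ R}) = eR.symm i := Subtype.ext hrepv
      refine Prod.ext ?_ ?_
      · show eR ⟨rep v, hrepR v⟩ = i
        rw [hsub, Equiv.apply_symm_apply]
      · show (if v ∈ R then (0 : Fin 2) else 1) = j
        rw [if_pos hvR, hj]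
    · have hj1 : j = 1 := by omega
      refine ⟨f v, ?_⟩
      have hfvR : f v ∉ R := hRfn v hvR
      have hrepfv : rep (f v) = v := by simp [rep, hfvR, hf2]
      have hsub : (⟨rep (f v), hrepR (f v)⟩ : {x // x ∈ R}) = eR.symm i :=
        Subtype.ext hrepfv
      refine Prod.ext ?_ ?_
      · show eR ⟨rep (f v), hrepR (f v)⟩ = i
        rw [hsub, Equiv.apply_symm_apply]
      · show (if f v ∈ R then (0 : Fin 2) else 1) = j
        rw [if_neg hfvR, hj1]
  let e : V ≃ Fin m × Fin 2 := Equiv.ofBijective φ ⟨hφinj, hφsurj⟩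
  refine ⟨m, ?_, ⟨⟨e, ?_⟩⟩⟩
  · have := Fintype.card_congr e
    simp only [Fintype.card_prod, Fintype.card_fin] at this
    omega
  · intro a b
    show (φ a).1 ≠ (φ b).1 ↔ G.Adj a b
    rw [hadj a b, Ne, hφfst a b, not_or]
    constructor
    · rintro ⟨h1, h2⟩
      exact ⟨fun hh => h1 hh.symm, h2⟩
    · rintro ⟨h1, h2⟩
      exact ⟨fun hh => h1 hh.symm, h2⟩

lemma hypo_of_pairing (p : V → V) (hp1 : ∀ v, p v ≠ v) (hpp : ∀ v, p (p v) = v)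
    (hpadj : ∀ v w, G.Adj v w ↔ (v ≠ w ∧ w ≠ p v)) (hcard : 4 ≤ Fintype.card V) :
    HypoUD G ∧ domNum G = 2 := by
  have hnadj : ∀ v, ¬ G.Adj v (p v) := fun v h => ((hpadj v (p v)).1 h).2 rfl
  have hdominates : ∀ a b, a ≠ b → b ≠ p a → IsDomSet G {a, b} := by
    intro a b hab hbpa v
    by_cases hva : v = a
    · exact ⟨a, by simp, Or.inl hva.symm⟩
    by_cases hvb : v = b
    · exact ⟨b, by simp, Or.inl hvb.symm⟩
    by_cases hvpa : v = p a
    · refine ⟨b, by simp, Or.inr ?_⟩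
      rw [hpadj]
      refine ⟨fun h => hvb h.symm, ?_⟩
      intro hh
      apply hab
      have h1 : p b = p a := hh.symm.trans hvpa
      have h2 := congrArg p h1
      rw [hpp, hpp] at h2
      exact h2.symm
    · refine ⟨a, by simp, Or.inr ?_⟩
      rw [hpadj]
      exact ⟨fun h => hva h.symm, hvpa⟩
  have hno1 : ∀ D : Finset V, IsDomSet G D → 2 ≤ D.card := by
    intro D hD
    by_contra hlt
    push_neg at hlt
    rcases (by omega : D.card = 0 ∨ D.card = 1) with hc | hc
    · rw [Finset.card_eq_zero] at hc
      subst hc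
      have : Nonempty V := Fintype.card_pos_iff.mp (by omega)
      obtain ⟨a⟩ := this
      obtain ⟨u, hu, -⟩ := hD a
      simp at hu
    · rw [Finset.card_eq_one] at hc
      obtain ⟨s, rfl⟩ := hc
      obtain ⟨u, hu, h⟩ := hD (p s)
      rw [Finset.mem_singleton] at hu
      rcases h with h | h
      · exact hp1 s (hu.symm.trans h).symm
      · rw [hu] at h
        exact hnadj s h
  have hne2 : Nonempty V := Fintype.card_pos_iff.mp (by omega)
  obtain ⟨a⟩ := hne2
  have hpa2 : ({a, p a} : Finset V).card ≤ 2 := by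
    have := Finset.card_insert_le a ({p a} : Finset V)
    simp only [Finset.card_singleton] at this
    omega
  obtain ⟨b, hb⟩ := exists_not_mem {a, p a} (by omega)
  simp only [Finset.mem_insert, Finset.mem_singleton] at hb
  push_neg at hb
  obtain ⟨hba, hbpa⟩ := hb
  have hdom2 : IsDomSet G {a, b} := hdominates a b (fun h => hba h.symm) hbpa
  have hab : a ≠ b := fun h => hba h.symm
  have hdn : domNum G = 2 := by
    have hle := domNum_le G hdom2
    rw [Finset.card_pair hab] at hle
    obtain ⟨D, hD, hcd⟩ := exists_gammaSet G
    have := hno1 D hD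
    omega
  have hc3 : ({a, p a, b} : Finset V).card ≤ 3 := card_triple_le _ _ _
  obtain ⟨b', hb'⟩ := exists_not_mem {a, p a, b} (by omega)
  simp only [Finset.mem_insert, Finset.mem_singleton] at hb'
  push_neg at hb'
  obtain ⟨hb'a, hb'pa, hb'b⟩ := hb'
  have hdom2' : IsDomSet G {a, b'} := hdominates a b' (fun h => hb'a h.symm) hb'pa
  have hab' : a ≠ b' := fun h => hb'a h.symm
  refine ⟨⟨⟨{a, b}, {a, b'}, ⟨hdom2, by rw [Finset.card_pair hab, hdn]⟩,
    ⟨hdom2', by rw [Finset.card_pair hab', hdn]⟩, ?_⟩, ?_⟩, hdn⟩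
  · intro h
    have : b ∈ ({a, b'} : Finset V) := by rw [← h]; simp
    rcases Finset.mem_insert.1 this with h' | h'
    · exact hba h'
    · exact hb'b (Finset.mem_singleton.1 h').symm
  · intro x
    have hpx : p x ≠ x := hp1 x
    have hsdom : IsDomSet (vdel G x) {(⟨p x, hpx⟩ : {u : V // u ≠ x})} := by
      intro v
      refine ⟨⟨p x, hpx⟩, Finset.mem_singleton_self _, ?_⟩
      by_cases hv : v.val = p x
      · exact Or.inl (Subtype.ext hv.symm)
      · refine Or.inr ?_
        show G.Adj (p x) v.val
        rw [hpadj]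
        refine ⟨fun h => hv h.symm, ?_⟩
        rw [hpp]
        exact v.prop
    have hdnv : domNum (vdel G x) = 1 := by
      have := domNum_le (vdel G x) hsdom
      simp only [Finset.card_singleton] at this
      have := vdel_domNum_ne_zero G x (p x) hpx
      omega
    refine ⟨{⟨p x, hpx⟩}, ⟨hsdom, by simp [hdnv]⟩, ?_⟩
    rintro D ⟨hDdom, hDcard⟩
    rw [hdnv, Finset.card_eq_one] at hDcard
    obtain ⟨s, rfl⟩ := hDcard
    have hs : s.val = p x := by
      have hpsx : p s.val = x := by
        by_contra hh
        obtain ⟨u, hu, h⟩ := hDdom ⟨p s.val, hh⟩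
        rw [Finset.mem_singleton] at hu
        rcases h with h | h
        · exact hp1 s.val (congrArg Subtype.val (hu.symm.trans h)).symm
        · rw [hu] at h
          exact hnadj s.val h
      have := congrArg p hpsx
      rw [hpp] at this
      exact this
    exact Finset.singleton_inj.2 (Subtype.ext hs)

end Construct

theorem hypoUD_domNum_two [Fintype V] [DecidableEq V] (G : SimpleGraph V) :
    (HypoUD G ∧ domNum G = 2) ↔
      ∃ m : ℕ, 2 ≤ m ∧ Nonempty (G ≃g completeMinusPM m) := by
  constructor
  · rintro ⟨hud, h2⟩
    have h3 : 3 ≤ Fintype.card V := by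
      obtain ⟨⟨D₁, D₂, hD₁, hD₂, hDne⟩, -⟩ := hud
      have cD₁ : D₁.card = 2 := by rw [hD₁.2, h2]
      have cD₂ : D₂.card = 2 := by rw [hD₂.2, h2]
      have hns : ¬ D₁ ⊆ D₂ := fun hsub =>
        hDne (Finset.eq_of_subset_of_card_le hsub (by omega))
      obtain ⟨a, haD₁, haD₂⟩ := Finset.not_subset.1 hns
      have h1 : (insert a D₂).card = 3 := by
        rw [Finset.card_insert_of_notMem haD₂, cD₂]
      have := Finset.card_le_card (Finset.subset_univ (insert a D₂))
      rw [h1, Finset.card_univ] at this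
      exact this
    obtain ⟨f, hf1, hf2, hadj⟩ := structure_of h2 hud
    obtain ⟨m, hcard, hiso⟩ := iso_of_involution f hf1 hf2 hadj
    exact ⟨m, by omega, hiso⟩
  · rintro ⟨m, hm, ⟨iso⟩⟩
    have hadj : ∀ a b, G.Adj a b ↔ (iso a).1 ≠ (iso b).1 := fun a b => iso.map_rel_iff.symm
    set e : V ≃ Fin m × Fin 2 := iso.toEquiv with he
    let p : V → V := fun v => e.symm ((e v).1, (e v).2 + 1)
    have hep : ∀ v, e (p v) = ((e v).1, (e v).2 + 1) := fun v => e.apply_symm_apply _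
    have hj1 : ∀ j : Fin 2, j + 1 ≠ j := by decide
    have hj2 : ∀ j : Fin 2, j + 1 + 1 = j := by decide
    have hall : ∀ j k : Fin 2, k = j ∨ k = j + 1 := by decide
    have hp1 : ∀ v, p v ≠ v := by
      intro v h
      have h' := congrArg e h
      rw [hep] at h'
      exact hj1 (e v).2 (congrArg Prod.snd h')
    have hpp : ∀ v, p (p v) = v := by
      intro v
      apply e.injective
      rw [hep, hep]
      exact Prod.ext rfl (hj2 (e v).2)
    have hpadj : ∀ v w, G.Adj v w ↔ (v ≠ w ∧ w ≠ p v) := by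
      intro v w
      rw [hadj]
      constructor
      · intro h
        constructor
        · rintro rfl
          exact h rfl
        · rintro rfl
          exact h (congrArg Prod.fst (hep v)).symm
      · rintro ⟨h1, h2⟩ heq
        rcases hall (e v).2 (e w).2 with h | h
        · exact h1 (e.injective (Prod.ext heq.symm h)).symm
        · apply h2
          apply e.injective
          rw [hep]
          exact Prod.ext heq.symm h
    have hcard4 : 4 ≤ Fintype.card V := by
      have := Fintype.card_congr e
      simp only [Fintype.card_prod, Fintype.card_fin] at this
      omega
    exact ⟨(hypo_of_pairing p hp1 hpp hpadj hcard4).1, (hypo_of_pairing p hp1 hpp hpadj hcard4).2⟩
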